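/- arXiv:1009.2952 — 2 statements merged into one kernel-verified Lean document; each statement's English description precedes it below -/
import Mathlib

section
/- Let d > 1, β > β(d), and h^t > 0. Suppose the recursion y_{n+1} = -h^t + d·φ(y_n) has a fixed point h_t⁺ > 0 that is the largest fixed point, and let H_t⁺ be the largest fixed point of y_{n+1} = h^t + d·φ(y_n); then H_t⁺ > h_t⁺. Moreover, for any sequence of site-fields defined on a tree by h_i^{j+1} = η_i·h^t + Σ_{l∼i} φ(h_l^j) with arbitrary signs η_i ∈ {−1,+1} and each vertex having d children, if all initial fields satisfy h_i^0 ≥ h_t⁺ then h_i^j ≥ h_t⁺ for all i and all j ≥ 0. -/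
/-- The inverse hyperbolic tangent, arctanh x = (1/2)·log((1+x)/(1-x)). -/
noncomputable def artanh (x : ℝ) : ℝ := (1 / 2) * Real.log ((1 + x) / (1 - x))

/-- The one-step Ising tree recursion function φ(x) = arctanh(tanh β · tanh x). -/
noncomputable def phi (β x : ℝ) : ℝ := artanh (Real.tanh β * Real.tanh x)

lemma tanh_lt_one' (x : ℝ) : Real.tanh x < 1 := by
  rw [Real.tanh_eq_sinh_div_cosh, div_lt_one (Real.cosh_pos x)]
  exact Real.sinh_lt_cosh x

lemma neg_one_lt_tanh (x : ℝ) : -1 < Real.tanh x := by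
  rw [Real.tanh_eq_sinh_div_cosh, lt_div_iff₀ (Real.cosh_pos x)]
  nlinarith [Real.cosh_add_sinh x, Real.exp_pos x]

lemma tanh_mono : Monotone Real.tanh := by
  intro a b hab
  have h1 := Real.cosh_pos a
  have h2 := Real.cosh_pos b
  rw [Real.tanh_eq_sinh_div_cosh, Real.tanh_eq_sinh_div_cosh, div_le_div_iff₀ h1 h2]
  have hs : (0:ℝ) ≤ Real.sinh (b - a) := by
    have : Real.sinh 0 ≤ Real.sinh (b - a) := Real.sinh_le_sinh.2 (by linarith)
    simpa using this
  nlinarith [Real.sinh_sub b a]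

lemma continuous_tanh' : Continuous Real.tanh := by
  have : Real.tanh = fun x => Real.sinh x / Real.cosh x := by
    funext x; exact Real.tanh_eq_sinh_div_cosh x
  rw [this]
  exact Real.continuous_sinh.div Real.continuous_cosh (fun x => (Real.cosh_pos x).ne')

lemma artanh_le_artanh {a b : ℝ} (ha : -1 < a) (hb : b < 1) (hab : a ≤ b) :
    artanh a ≤ artanh b := by
  unfold artanh
  have h1 : 0 < 1 + a := by linarith
  have h2 : 0 < 1 - a := by linarith
  have h3 : 0 < 1 + b := by linarith
  have h4 : 0 < 1 - b := by linarith
  have : (1 + a) / (1 - a) ≤ (1 + b) / (1 - b) := by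
    rw [div_le_div_iff₀ h2 h4]; nlinarith
  have hlog := Real.log_le_log (by positivity) this
  linarith

lemma artanh_lt_artanh {a b : ℝ} (ha : -1 < a) (hb : b < 1) (hab : a < b) :
    artanh a < artanh b := by
  unfold artanh
  have h1 : 0 < 1 + a := by linarith
  have h2 : 0 < 1 - a := by linarith
  have h3 : 0 < 1 + b := by linarith
  have h4 : 0 < 1 - b := by linarith
  have : (1 + a) / (1 - a) < (1 + b) / (1 - b) := by
    rw [div_lt_div_iff₀ h2 h4]; nlinarith
  have hlog := Real.log_lt_log (by positivity) this
  linarith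

lemma artanh_tanh' (x : ℝ) : artanh (Real.tanh x) = x := by
  unfold artanh
  have hc := Real.cosh_pos x
  have h1 : 1 + Real.tanh x = Real.exp x / Real.cosh x := by
    rw [Real.tanh_eq_sinh_div_cosh]
    field_simp
    exact Real.cosh_add_sinh x
  have h2 : 1 - Real.tanh x = Real.exp (-x) / Real.cosh x := by
    rw [Real.tanh_eq_sinh_div_cosh]
    field_simp
    rw [Real.cosh_sub_sinh]
  rw [h1, h2]
  have h3 : Real.exp x / Real.cosh x / (Real.exp (-x) / Real.cosh x) = Real.exp (x - -x) := by
    rw [Real.exp_sub]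
    field_simp
  rw [h3, Real.log_exp]
  ring

lemma abs_mul_tanh_lt {t : ℝ} (ht : |t| < 1) (y : ℝ) : |t * Real.tanh y| < 1 := by
  have hy : |Real.tanh y| < 1 := abs_lt.2 ⟨neg_one_lt_tanh y, tanh_lt_one' y⟩
  calc |t * Real.tanh y| = |t| * |Real.tanh y| := abs_mul _ _
    _ ≤ |t| * 1 := by nlinarith [abs_nonneg t, abs_nonneg (Real.tanh y)]
    _ < 1 := by linarith

lemma phi_mono {β : ℝ} (hβ : 0 ≤ Real.tanh β) : Monotone (phi β) := by
  intro a b hab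
  unfold phi
  set t := Real.tanh β with htdef
  have ht1 : |t| < 1 := abs_lt.2 ⟨neg_one_lt_tanh β, tanh_lt_one' β⟩
  have ha := abs_lt.1 (abs_mul_tanh_lt ht1 a)
  have hb := abs_lt.1 (abs_mul_tanh_lt ht1 b)
  exact artanh_le_artanh ha.1 hb.2 (mul_le_mul_of_nonneg_left (tanh_mono hab) hβ)

lemma phi_lt_beta {β : ℝ} (hβ : 0 < Real.tanh β) (x : ℝ) : phi β x < β := by
  unfold phi
  set t := Real.tanh β with htdef
  have ht1 : |t| < 1 := abs_lt.2 ⟨neg_one_lt_tanh β, tanh_lt_one' β⟩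
  have hx := abs_lt.1 (abs_mul_tanh_lt ht1 x)
  have hlt : t * Real.tanh x < t := by nlinarith [tanh_lt_one' x]
  have := artanh_lt_artanh hx.1 (abs_lt.1 ht1).2 hlt
  rwa [artanh_tanh'] at this

lemma phi_continuous (β : ℝ) : Continuous (phi β) := by
  unfold phi artanh
  set t := Real.tanh β with htdef
  have ht1 : |t| < 1 := abs_lt.2 ⟨neg_one_lt_tanh β, tanh_lt_one' β⟩
  apply Continuous.mul continuous_const
  rw [continuous_iff_continuousAt]
  intro x
  have hx := abs_lt.1 (abs_mul_tanh_lt ht1 x)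
  have hinner : ContinuousAt (fun y => (1 + t * Real.tanh y) / (1 - t * Real.tanh y)) x := by
    apply ContinuousAt.div
    · exact (continuous_const.add (continuous_const.mul continuous_tanh')).continuousAt
    · exact (continuous_const.sub (continuous_const.mul continuous_tanh')).continuousAt
    · have : 0 < 1 - t * Real.tanh x := by linarith
      linarith [this.ne']
  have hposratio : 0 < (1 + t * Real.tanh x) / (1 - t * Real.tanh x) :=
    div_pos (by linarith) (by linarith)
  exact ContinuousAt.log hinner hposratio.ne'

theorem stmt_6 (β : ℝ) (d : ℕ) (hd : 1 < d) (hβ : 1 < (d : ℝ) * Real.tanh β)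
    (ht : ℝ) (hht : 0 < ht)
    (htp Htp : ℝ) (htp_pos : 0 < htp)
    (htp_fix : htp = -ht + d * phi β htp)
    (htp_max : ∀ y : ℝ, y = -ht + d * phi β y → y ≤ htp)
    (Htp_fix : Htp = ht + d * phi β Htp)
    (Htp_max : ∀ y : ℝ, y = ht + d * phi β y → y ≤ Htp) :
    htp < Htp ∧
    ∀ (V : Type) (children : V → Finset V) (η : V → ℝ) (h : ℕ → V → ℝ),
      (∀ i, (children i).card = d) →
      (∀ i, η i = 1 ∨ η i = -1) →
      (∀ j i, h (j + 1) i = η i * ht + ∑ l ∈ children i, phi β (h j l)) →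
      (∀ i, htp ≤ h 0 i) →
      ∀ j i, htp ≤ h j i := by
  have hd0 : (0:ℝ) < (d:ℝ) := by positivity
  have htpos : 0 < Real.tanh β := by nlinarith
  have hβpos : 0 < β := by
    by_contra hcon
    push_neg at hcon
    have : Real.tanh β ≤ Real.tanh 0 := tanh_mono hcon
    rw [Real.tanh_zero] at this
    linarith
  have hphi_lt := phi_lt_beta htpos
  constructor
  · -- htp < Htp via IVT
    set f : ℝ → ℝ := fun y => ht + d * phi β y - y with hf
    have hfc : Continuous f := by
      apply Continuous.sub _ continuous_id
      exact continuous_const.add (continuous_const.mul (phi_continuous β))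
    set M : ℝ := ht + d * β with hM
    have hfhtp : f htp = 2 * ht := by simp only [hf]; linarith
    have hfM : f M < 0 := by
      have := hphi_lt M
      simp only [hf, hM]
      nlinarith
    have hle : htp ≤ M := by
      have := hphi_lt htp
      nlinarith
    have hIVT := intermediate_value_Icc' hle hfc.continuousOn
    have h0mem : (0:ℝ) ∈ Set.Icc (f M) (f htp) := ⟨hfM.le, by rw [hfhtp]; linarith⟩
    obtain ⟨y, hy, hfy⟩ := hIVT h0mem
    have hyfix : y = ht + d * phi β y := by
      simp only [hf] at hfy; linarith
    have hyne : y ≠ htp := by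
      intro h; rw [h, hfhtp] at hfy; linarith
    exact lt_of_lt_of_le (lt_of_le_of_ne hy.1 (Ne.symm hyne)) (Htp_max y hyfix)
  · -- uniform lower bound
    intro V children η h hcard hη hrec h0 j
    induction j with
    | zero => exact h0
    | succ j ih =>
      intro i
      rw [hrec j i]
      have hη' : -ht ≤ η i * ht := by
        rcases hη i with he | he <;> rw [he] <;> linarith
      have hsum : (d:ℝ) * phi β htp ≤ ∑ l ∈ children i, phi β (h j l) := by
        calc (d:ℝ) * phi β htp = ∑ _l ∈ children i, phi β htp := by
              rw [Finset.sum_const, hcard i, nsmul_eq_mul]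
          _ ≤ ∑ l ∈ children i, phi β (h j l) :=
              Finset.sum_le_sum fun l _ => phi_mono htpos.le (ih l)
      linarith [htp_fix]
end

section
/- For β > 0 and x, y ∈ ℝ, |φ(x) − φ(y)| ≤ tanh(β)·|x − y|, where φ(x) = arctanh(tanh(β)·tanh(x)); i.e., φ is a tanh(β)-Lipschitz map, and hence for d·tanh(β) < 1 the map x ↦ h + d·φ(x) is a contraction with a unique, globally attracting fixed point for every h ∈ ℝ. -/
lemma abs_tanh_lt_one (x : ℝ) : |Real.tanh x| < 1 := by
  have hc : 0 < Real.cosh x := Real.cosh_pos x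
  rw [Real.tanh_eq_sinh_div_cosh, abs_div, abs_of_pos hc, div_lt_one hc]
  nlinarith [Real.cosh_sq_sub_sinh_sq x, abs_nonneg (Real.sinh x), sq_abs (Real.sinh x)]

lemma tanh_pos' {x : ℝ} (h : 0 < x) : 0 < Real.tanh x := by
  rw [Real.tanh_eq_sinh_div_cosh]
  exact div_pos (Real.sinh_pos_iff.2 h) (Real.cosh_pos x)

lemma hasDerivAt_tanh (x : ℝ) : HasDerivAt Real.tanh (1 / Real.cosh x ^ 2) x := by
  have hc : Real.cosh x ≠ 0 := (Real.cosh_pos x).ne'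
  have h := (Real.hasDerivAt_sinh x).div (Real.hasDerivAt_cosh x) hc
  have heq : (Real.cosh x * Real.cosh x - Real.sinh x * Real.sinh x) / Real.cosh x ^ 2
      = 1 / Real.cosh x ^ 2 := by
    rw [show Real.cosh x * Real.cosh x - Real.sinh x * Real.sinh x =
      Real.cosh x ^ 2 - Real.sinh x ^ 2 by ring, Real.cosh_sq_sub_sinh_sq]
  rw [heq] at h
  rw [show Real.tanh = Real.sinh / Real.cosh from funext fun y => Real.tanh_eq_sinh_div_cosh y]
  exact h

noncomputable def phiD (β x : ℝ) : ℝ :=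
  Real.tanh β * (1 / Real.cosh x ^ 2) / (1 - (Real.tanh β * Real.tanh x) ^ 2)

lemma one_add_pos (β x : ℝ) : 0 < 1 + Real.tanh β * Real.tanh x := by
  have h1 := abs_tanh_lt_one β
  have h2 := abs_tanh_lt_one x
  have : |Real.tanh β * Real.tanh x| < 1 := by
    rw [abs_mul]
    calc |Real.tanh β| * |Real.tanh x| ≤ |Real.tanh β| * 1 :=
          mul_le_mul_of_nonneg_left h2.le (abs_nonneg _)
      _ < 1 := by simpa using h1
  linarith [(abs_lt.1 this).1]

lemma one_sub_pos' (β x : ℝ) : 0 < 1 - Real.tanh β * Real.tanh x := by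
  have h1 := abs_tanh_lt_one β
  have h2 := abs_tanh_lt_one x
  have : |Real.tanh β * Real.tanh x| < 1 := by
    rw [abs_mul]
    calc |Real.tanh β| * |Real.tanh x| ≤ |Real.tanh β| * 1 :=
          mul_le_mul_of_nonneg_left h2.le (abs_nonneg _)
      _ < 1 := by simpa using h1
  linarith [(abs_lt.1 this).2]

lemma hasDerivAt_phi (β x : ℝ) : HasDerivAt (phi β) (phiD β x) x := by
  set t := Real.tanh β with ht
  have hp : 0 < 1 + t * Real.tanh x := one_add_pos β x
  have hm : 0 < 1 - t * Real.tanh x := one_sub_pos' β x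
  have h1 : HasDerivAt (fun y => 1 + t * Real.tanh y) (t * (1 / Real.cosh x ^ 2)) x :=
    ((hasDerivAt_tanh x).const_mul t).const_add 1
  have h2 : HasDerivAt (fun y => 1 - t * Real.tanh y) (-(t * (1 / Real.cosh x ^ 2))) x :=
    ((hasDerivAt_tanh x).const_mul t).const_sub 1
  have hl1 := h1.log hp.ne'
  have hl2 := h2.log hm.ne'
  have hF := ((hl1.sub hl2).const_mul (1/2 : ℝ))
  have hfun : (fun y => (1/2 : ℝ) * (Real.log (1 + t * Real.tanh y)
      - Real.log (1 - t * Real.tanh y))) = phi β := by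
    funext y
    have hpy : 0 < 1 + t * Real.tanh y := one_add_pos β y
    have hmy : 0 < 1 - t * Real.tanh y := one_sub_pos' β y
    rw [phi, artanh, Real.log_div hpy.ne' hmy.ne']
  simp only [Pi.sub_apply] at hF
  rw [hfun] at hF
  refine hF.congr_deriv ?_
  have hpne := hp.ne'
  have hmne := hm.ne'
  rw [phiD, ← ht, show (1 : ℝ) - (t * Real.tanh x)^2 = (1 + t * Real.tanh x) * (1 - t * Real.tanh x) by ring]
  field_simp
  ring

lemma phiD_bound (β x : ℝ) (hβ : 0 < β) : |phiD β x| ≤ Real.tanh β := by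
  have ht : 0 < Real.tanh β := tanh_pos' hβ
  have ht1 : Real.tanh β < 1 := (abs_lt.1 (abs_tanh_lt_one β)).2
  have hs1 : Real.tanh x ^ 2 < 1 := by
    have := abs_tanh_lt_one x
    nlinarith [sq_abs (Real.tanh x), abs_nonneg (Real.tanh x)]
  have hc : (1 : ℝ) / Real.cosh x ^ 2 = 1 - Real.tanh x ^ 2 := by
    have hcp : Real.cosh x ≠ 0 := (Real.cosh_pos x).ne'
    rw [Real.tanh_eq_sinh_div_cosh]
    field_simp
    linarith [Real.cosh_sq_sub_sinh_sq x]
  have ht2 : Real.tanh β ^ 2 ≤ 1 := by nlinarith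
  have hden : 0 < 1 - (Real.tanh β * Real.tanh x) ^ 2 := by
    nlinarith [sq_nonneg (Real.tanh x), mul_pow (Real.tanh β) (Real.tanh x) 2]
  rw [phiD, hc]
  have h0 : 0 ≤ Real.tanh β * (1 - Real.tanh x ^ 2) / (1 - (Real.tanh β * Real.tanh x) ^ 2) := by
    apply div_nonneg _ hden.le
    nlinarith
  rw [abs_of_nonneg h0, div_le_iff₀ hden]
  nlinarith [sq_nonneg (Real.tanh x), mul_pow (Real.tanh β) (Real.tanh x) 2,
    mul_nonneg ht.le (sq_nonneg (Real.tanh x))]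

lemma phi_lipschitz (β : ℝ) (hβ : 0 < β) (x y : ℝ) :
    |phi β x - phi β y| ≤ Real.tanh β * |x - y| := by
  have := Convex.norm_image_sub_le_of_norm_hasDerivWithin_le
    (f := phi β) (f' := phiD β) (s := Set.univ) (C := Real.tanh β)
    (fun z _ => (hasDerivAt_phi β z).hasDerivWithinAt)
    (fun z _ => by simpa [Real.norm_eq_abs] using phiD_bound β z hβ)
    convex_univ (Set.mem_univ y) (Set.mem_univ x)
  simpa [Real.norm_eq_abs] using this

theorem stmt_19 (β : ℝ) (hβ : 0 < β) :
    (∀ x y : ℝ, |phi β x - phi β y| ≤ Real.tanh β * |x - y|) ∧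
    (∀ d h : ℝ, 0 < d → d * Real.tanh β < 1 →
      (∀ x y : ℝ, |(h + d * phi β x) - (h + d * phi β y)| ≤ d * Real.tanh β * |x - y|) ∧
      ∃ p : ℝ, h + d * phi β p = p ∧ (∀ q : ℝ, h + d * phi β q = q → q = p) ∧
        ∀ x0 : ℝ,
          Filter.Tendsto (fun n => (fun x => h + d * phi β x)^[n] x0) Filter.atTop (nhds p)) := by
  refine ⟨phi_lipschitz β hβ, fun d h hd hlt => ?_⟩
  have hlip : ∀ x y : ℝ, |(h + d * phi β x) - (h + d * phi β y)| ≤ d * Real.tanh β * |x - y| := by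
    intro x y
    have h1 : (h + d * phi β x) - (h + d * phi β y) = d * (phi β x - phi β y) := by ring
    rw [h1, abs_mul, abs_of_pos hd, mul_assoc]
    exact mul_le_mul_of_nonneg_left (phi_lipschitz β hβ x y) hd.le
  refine ⟨hlip, ?_⟩
  set f : ℝ → ℝ := fun x => h + d * phi β x with hf
  have hK0 : 0 ≤ d * Real.tanh β := mul_nonneg hd.le (tanh_pos' hβ).le
  set K : NNReal := ⟨d * Real.tanh β, hK0⟩ with hK
  have hlipK : LipschitzWith K f := by
    apply LipschitzWith.of_dist_le_mul
    intro x y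
    simp only [Real.dist_eq]
    calc |f x - f y| = |(h + d * phi β x) - (h + d * phi β y)| := rfl
      _ ≤ d * Real.tanh β * |x - y| := hlip x y
      _ = ↑K * |x - y| := rfl
  have hC : ContractingWith K f := by
    refine ⟨?_, hlipK⟩
    rw [← NNReal.coe_lt_coe]
    exact hlt
  refine ⟨hC.fixedPoint f, hC.fixedPoint_isFixedPt, fun q hq => hC.fixedPoint_unique hq,
    fun x0 => hC.tendsto_iterate_fixedPoint x0⟩
end
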